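/- Let Ω ⊆ ℝⁿ be a closed convex set with nonempty interior and let 𝔉 be the Funk metric on the interior of Ω. Then for every t ∈ [0,1], Euclidean straight line segments contained in the interior of Ω are geodesics for the arithmetic weighted Funk metric 𝔉_t^a(x,y) = (1−t)·𝔉(x,y) + t·𝔉(y,x); that is, the length of any straight segment with respect to 𝔉_t^a (the supremum over finite partitions of the sums of 𝔉_t^a-distances of consecutive points) equals the 𝔉_t^a-distance between its endpoints. -/

import Mathlib

open Set
open scoped ENNReal

noncomputable section

open scoped Classical

/-- The length of a path `α` on `[a,b]` with respect to a weak metric `η`: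
the supremum, over all finite partitions `a = t₀ ≤ t₁ ≤ … ≤ t_{k+1} = b`, of
`Σ η (α tᵢ) (α tᵢ₊₁)`. -/
noncomputable def weakMetricLength {X : Type*} (η : X → X → ℝ≥0∞) (α : ℝ → X)
    (a b : ℝ) : ℝ≥0∞ :=
  ⨆ (k : ℕ) (T : Fin (k + 2) → ℝ)
    (_ : Monotone T ∧ T 0 = a ∧ T (Fin.last (k + 1)) = b),
    ∑ i : Fin (k + 1), η (α (T i.castSucc)) (α (T i.succ))

variable {n : ℕ}

/-- The Funk weak metric of a convex body `Ω ⊆ ℝⁿ`. For `x ≠ y` in the interior of `Ω`,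
if the ray `R(x,y)` from `x` through `y` leaves `Ω` (equivalently, the set of parameters
`s ≥ 0` with `x + s(y−x) ∈ Ω` is bounded), it hits the boundary at the point
`a⁺ = x + s⁺·(y−x)` with `s⁺ = sup {s ≥ 0 | x + s(y−x) ∈ Ω}`, and
`𝔉(x,y) = log (|x−a⁺| / |y−a⁺|)`; otherwise `𝔉(x,y) = 0`. -/
noncomputable def funkD (Ω : Set (EuclideanSpace ℝ (Fin n)))
    (x y : EuclideanSpace ℝ (Fin n)) : ℝ :=
  if BddAbove {s : ℝ | 0 ≤ s ∧ x + s • (y - x) ∈ Ω} then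
    Real.log
      (dist x (x + sSup {s : ℝ | 0 ≤ s ∧ x + s • (y - x) ∈ Ω} • (y - x)) /
       dist y (x + sSup {s : ℝ | 0 ≤ s ∧ x + s • (y - x) ∈ Ω} • (y - x)))
  else 0

/-- The arithmetic weighted Funk metric `𝔉_t^a(x,y) = (1−t)𝔉(x,y) + t𝔉(y,x)`. -/
noncomputable def funkWa (Ω : Set (EuclideanSpace ℝ (Fin n))) (t : ℝ)
    (x y : EuclideanSpace ℝ (Fin n)) : ℝ :=
  (1 - t) * funkD Ω x y + t * funkD Ω y x

lemma funkD_self (Ω : Set (EuclideanSpace ℝ (Fin n))) {x : EuclideanSpace ℝ (Fin n)}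
    (hx : x ∈ Ω) : funkD Ω x x = 0 := by
  have h : {s : ℝ | 0 ≤ s ∧ x + s • (x - x) ∈ Ω} = Ici 0 := by
    ext s; simp [hx]
  rw [funkD, if_neg]
  rw [h]
  exact not_bddAbove_Ici 0

lemma funk_line (Ω : Set (EuclideanSpace ℝ (Fin n)))
    (c e : EuclideanSpace ℝ (Fin n)) (he : e ≠ 0) {a b : ℝ} (hab : a < b)
    (ha : c + a • e ∈ Ω) (hb : c + b • e ∈ interior Ω) :
    funkD Ω (c + a • e) (c + b • e) =
      (if BddAbove {r : ℝ | c + r • e ∈ Ω}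
        then Real.log ((sSup {r : ℝ | c + r • e ∈ Ω} - a) /
                       (sSup {r : ℝ | c + r • e ∈ Ω} - b))
        else 0) ∧
    (BddAbove {r : ℝ | c + r • e ∈ Ω} → b < sSup {r : ℝ | c + r • e ∈ Ω}) := by
  set K : Set ℝ := {r : ℝ | c + r • e ∈ Ω} with hKdef
  have hbab : (0:ℝ) < b - a := by linarith
  have hkey : ∀ s : ℝ, (c + a • e) + s • ((c + b • e) - (c + a • e))
      = c + (a + s * (b - a)) • e := by
    intro s; module
  have hSdef : {s : ℝ | 0 ≤ s ∧ (c + a • e) + s • ((c + b • e) - (c + a • e)) ∈ Ω}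
      = {s : ℝ | 0 ≤ s ∧ a + s * (b - a) ∈ K} := by
    ext s
    simp only [mem_setOf_eq, hkey s, hKdef]
  have hene : ‖e‖ ≠ 0 := norm_ne_zero_iff.mpr he
  have henorm : (0:ℝ) < ‖e‖ := norm_pos_iff.mpr he
  have haK : a ∈ K := show c + a • e ∈ Ω from ha
  have hbK : b ∈ K := show c + b • e ∈ Ω from interior_subset hb
  have hbK' : ∃ δ > 0, b + δ ∈ K := by
    obtain ⟨ε, hε, hball⟩ := Metric.isOpen_iff.mp isOpen_interior _ hb
    refine ⟨ε / (2 * ‖e‖), by positivity, ?_⟩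
    have hmem : c + (b + ε/(2*‖e‖)) • e ∈ Metric.ball (c + b • e) ε := by
      rw [Metric.mem_ball, dist_eq_norm]
      have h2 : (c + (b + ε/(2*‖e‖)) • e) - (c + b • e) = (ε/(2*‖e‖)) • e := by module
      rw [h2, norm_smul, Real.norm_eq_abs, abs_of_pos (by positivity)]
      have h3 : ε/(2*‖e‖) * ‖e‖ = ε/2 := by field_simp
      rw [h3]; linarith
    exact show c + (b + ε/(2*‖e‖)) • e ∈ Ω from interior_subset (hball hmem)
  have hS0 : (0:ℝ) ∈ {s : ℝ | 0 ≤ s ∧ a + s * (b - a) ∈ K} := by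
    refine ⟨le_refl 0, ?_⟩; simpa using haK
  by_cases hB : BddAbove K
  · have hKne : K.Nonempty := ⟨a, haK⟩
    have hlub : IsLUB K (sSup K) := isLUB_csSup hKne hB
    obtain ⟨δ, hδ, hδK⟩ := hbK'
    have hbM : b < sSup K := lt_of_lt_of_le (by linarith) (hlub.1 hδK)
    have haM : a < sSup K := hab.trans hbM
    refine ⟨?_, fun _ => hbM⟩
    have hlubS : IsLUB {s : ℝ | 0 ≤ s ∧ a + s * (b - a) ∈ K} ((sSup K - a)/(b-a)) := by
      constructor
      · rintro s ⟨hs0, hsK⟩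
        have hle := hlub.1 hsK
        rw [le_div_iff₀ hbab]; linarith
      · intro u hu
        have hu0 : 0 ≤ u := hu hS0
        rw [div_le_iff₀ hbab]
        have hKle : sSup K ≤ a + u * (b - a) := by
          refine csSup_le hKne ?_
          intro r hr
          rcases le_or_gt r a with h | h
          · nlinarith
          · have hs : (r - a)/(b - a) ∈ {s : ℝ | 0 ≤ s ∧ a + s * (b - a) ∈ K} := by
              refine ⟨div_nonneg (by linarith) (by linarith), ?_⟩
              have : a + (r - a)/(b - a) * (b - a) = r := by field_simp; ring
              rw [this]; exact hr
            have := hu hs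
            rw [div_le_iff₀ hbab] at this
            linarith
        linarith
    have hSb : BddAbove {s : ℝ | 0 ≤ s ∧ a + s * (b - a) ∈ K} := ⟨_, hlubS.1⟩
    have hSSup : sSup {s : ℝ | 0 ≤ s ∧ a + s * (b - a) ∈ K} = (sSup K - a)/(b-a) :=
      hlubS.csSup_eq ⟨0, hS0⟩
    rw [funkD, hSdef, if_pos hSb, hSSup, if_pos hB]
    have hpt : (c + a • e) + ((sSup K - a)/(b-a)) • ((c + b • e) - (c + a • e))
        = c + sSup K • e := by
      rw [hkey]
      have h4 : a + (sSup K - a)/(b-a) * (b - a) = sSup K := by field_simp; ring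
      rw [h4]
    rw [hpt]
    have hd1 : dist (c + a • e) (c + sSup K • e) = (sSup K - a) * ‖e‖ := by
      rw [dist_eq_norm]
      have h5 : (c + a • e) - (c + sSup K • e) = (a - sSup K) • e := by module
      rw [h5, norm_smul, Real.norm_eq_abs, abs_of_nonpos (by linarith), neg_sub]
    have hd2 : dist (c + b • e) (c + sSup K • e) = (sSup K - b) * ‖e‖ := by
      rw [dist_eq_norm]
      have h5 : (c + b • e) - (c + sSup K • e) = (b - sSup K) • e := by module
      rw [h5, norm_smul, Real.norm_eq_abs, abs_of_nonpos (by linarith), neg_sub]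
    rw [hd1, hd2, mul_div_mul_right _ _ hene]
  · refine ⟨?_, fun h => absurd h hB⟩
    have hSnb : ¬ BddAbove {s : ℝ | 0 ≤ s ∧ a + s * (b - a) ∈ K} := by
      rintro ⟨u, hu⟩
      apply hB
      refine ⟨a + (max u 0) * (b - a), ?_⟩
      intro r hr
      rcases le_or_gt r a with h | h
      · have := le_max_right u 0
        nlinarith
      · have hs : (r - a)/(b - a) ∈ {s : ℝ | 0 ≤ s ∧ a + s * (b - a) ∈ K} := by
          refine ⟨div_nonneg (by linarith) (by linarith), ?_⟩
          have : a + (r - a)/(b - a) * (b - a) = r := by field_simp; ring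
          rw [this]; exact hr
        have h6 := hu hs
        rw [div_le_iff₀ hbab] at h6
        have := le_max_left u 0
        nlinarith
    rw [funkD, hSdef, if_neg hSnb, if_neg hB]

lemma funk_tele {m : ℕ} (f : Fin (m+1) → ℝ) :
    ∑ i : Fin m, (f i.castSucc - f i.succ) = f 0 - f (Fin.last m) := by
  induction m with
  | zero => simp
  | succ m ih =>
    rw [Fin.sum_univ_castSucc]
    have h1 : ∀ i : Fin m, f i.castSucc.castSucc - f i.castSucc.succ
        = (f ∘ Fin.castSucc) i.castSucc - (f ∘ Fin.castSucc) i.succ := by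
      intro i
      simp only [Function.comp_apply, Fin.succ_castSucc]
    rw [Finset.sum_congr rfl (fun i _ => h1 i), ih (f ∘ Fin.castSucc)]
    simp [Fin.succ_last]

theorem funk_main
    (Ω : Set (EuclideanSpace ℝ (Fin n)))
    (hcl : IsClosed Ω) (hconv : Convex ℝ Ω) (hne : (interior Ω).Nonempty)
    (t : ℝ) (ht : t ∈ Icc (0 : ℝ) 1)
    (p q : EuclideanSpace ℝ (Fin n)) (hp : p ∈ interior Ω) (hq : q ∈ interior Ω) :
    (⨆ (k : ℕ) (T : Fin (k + 2) → ℝ)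
      (_ : Monotone T ∧ T 0 = 0 ∧ T (Fin.last (k + 1)) = 1),
      ∑ i : Fin (k + 1),
        ENNReal.ofReal (funkWa Ω t (p + (T i.castSucc) • (q - p)) (p + (T i.succ) • (q - p))))
      = ENNReal.ofReal (funkWa Ω t p q) := by
  set α : ℝ → EuclideanSpace ℝ (Fin n) := fun s => p + s • (q - p) with hα
  -- the segment lies in the interior
  have hseg : ∀ s : ℝ, 0 ≤ s → s ≤ 1 → α s ∈ interior Ω := by
    intro s hs hs1
    have hconvI : Convex ℝ (interior Ω) := hconv.interior
    have hmem := hconvI hp hq (by linarith : (0:ℝ) ≤ 1 - s) hs (by ring)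
    have heq : α s = (1 - s) • p + s • q := by rw [hα]; module
    rw [heq]; exact hmem
  -- the potential function
  obtain ⟨φ, hW⟩ : ∃ φ : ℝ → ℝ, ∀ a b : ℝ, 0 ≤ a → a ≤ b → b ≤ 1 →
      0 ≤ funkWa Ω t (α a) (α b) ∧ funkWa Ω t (α a) (α b) = φ a - φ b := by
    by_cases hpq : q = p
    · refine ⟨fun _ => 0, fun a b _ _ _ => ?_⟩
      have hz : ∀ s : ℝ, α s = p := by intro s; rw [hα]; simp [hpq]
      rw [hz a, hz b, funkWa, funkD_self Ω (interior_subset hp)]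
      norm_num
    · have he : q - p ≠ 0 := sub_ne_zero.mpr hpq
      have hne' : -(q - p) ≠ 0 := neg_ne_zero.mpr he
      set K : Set ℝ := {r : ℝ | p + r • (q - p) ∈ Ω} with hKdef
      set K' : Set ℝ := {r : ℝ | p + r • (-(q - p)) ∈ Ω} with hK'def
      have hKK' : K' = -K := by
        ext r
        simp only [hK'def, hKdef, Set.mem_neg, mem_setOf_eq, smul_neg, neg_smul, neg_neg]
      have hsup' : sSup K' = - sInf K := by rw [hKK', Real.sInf_def]; ring
      have hBB' : BddAbove K' ↔ BddBelow K := by rw [hKK']; exact bddAbove_neg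
      refine ⟨fun r =>
        (1 - t) * (if BddAbove K then Real.log (sSup K - r) else 0)
        + t * (if BddBelow K then - Real.log (r - sInf K) else 0), ?_⟩
      intro a b ha0 hab hb1
      rcases eq_or_lt_of_le hab with rfl | hab'
      · rw [funkWa, funkD_self Ω (interior_subset (hseg a ha0 hb1))]
        norm_num
      · -- forward Funk distance
        have hfwd := funk_line Ω p (q - p) he hab'
          (interior_subset (hseg a ha0 (le_of_lt (lt_of_lt_of_le hab' hb1))))
          (hseg b (le_trans ha0 hab) hb1)
        -- backward Funk distance
        have hrw1 : α b = p + (-b) • (-(q - p)) := by rw [hα]; module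
        have hrw2 : α a = p + (-a) • (-(q - p)) := by rw [hα]; module
        have hbwd := funk_line Ω p (-(q - p)) hne' (by linarith : -b < -a)
          (by rw [← hrw1]; exact interior_subset (hseg b (le_trans ha0 hab) hb1))
          (by rw [← hrw2]; exact hseg a ha0 (le_of_lt (lt_of_lt_of_le hab' hb1)))
        rw [← hrw1, ← hrw2] at hbwd
        rw [funkWa]
        have hfab : funkD Ω (α a) (α b) =
            if BddAbove K then Real.log ((sSup K - a) / (sSup K - b)) else 0 := hfwd.1
        have hfba : funkD Ω (α b) (α a) =
            if BddBelow K then Real.log ((b - sInf K) / (a - sInf K)) else 0 := by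
          rw [hbwd.1]
          by_cases hBB : BddBelow K
          · rw [if_pos (hBB'.mpr hBB), if_pos hBB, hsup']
            ring_nf
          · rw [if_neg (fun h => hBB (hBB'.mp h)), if_neg hBB]
        rw [hfab, hfba]
        by_cases hBA : BddAbove K <;> by_cases hBB : BddBelow K
        · have hbM : b < sSup K := hfwd.2 hBA
          have hma : sInf K < a := by
            have := hbwd.2 (hBB'.mpr hBB); rw [hsup'] at this; linarith
          have h1 : Real.log ((sSup K - a) / (sSup K - b))
              = Real.log (sSup K - a) - Real.log (sSup K - b) :=
            Real.log_div (by linarith) (by linarith)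
          have h2 : Real.log ((b - sInf K) / (a - sInf K))
              = Real.log (b - sInf K) - Real.log (a - sInf K) :=
            Real.log_div (by linarith) (by linarith)
          constructor
          · have hl1 : 0 ≤ Real.log ((sSup K - a) / (sSup K - b)) :=
              Real.log_nonneg ((one_le_div (by linarith)).mpr (by linarith))
            have hl2 : 0 ≤ Real.log ((b - sInf K) / (a - sInf K)) :=
              Real.log_nonneg ((one_le_div (by linarith)).mpr (by linarith))
            simp only [if_pos hBA, if_pos hBB]
            have := ht.1; have := ht.2
            nlinarith
          · simp only [if_pos hBA, if_pos hBB, h1, h2]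
            ring
        · have hbM : b < sSup K := hfwd.2 hBA
          have h1 : Real.log ((sSup K - a) / (sSup K - b))
              = Real.log (sSup K - a) - Real.log (sSup K - b) :=
            Real.log_div (by linarith) (by linarith)
          constructor
          · have hl1 : 0 ≤ Real.log ((sSup K - a) / (sSup K - b)) :=
              Real.log_nonneg ((one_le_div (by linarith)).mpr (by linarith))
            simp only [if_pos hBA, if_neg hBB]
            have := ht.1; have := ht.2
            nlinarith
          · simp only [if_pos hBA, if_neg hBB, h1]
            ring
        · have hma : sInf K < a := by
            have := hbwd.2 (hBB'.mpr hBB); rw [hsup'] at this; linarith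
          have h2 : Real.log ((b - sInf K) / (a - sInf K))
              = Real.log (b - sInf K) - Real.log (a - sInf K) :=
            Real.log_div (by linarith) (by linarith)
          constructor
          · have hl2 : 0 ≤ Real.log ((b - sInf K) / (a - sInf K)) :=
              Real.log_nonneg ((one_le_div (by linarith)).mpr (by linarith))
            simp only [if_neg hBA, if_pos hBB]
            have := ht.1; have := ht.2
            nlinarith
          · simp only [if_neg hBA, if_pos hBB, h2]
            ring
        · simp only [if_neg hBA, if_neg hBB]
          norm_num
  -- value on any admissible partition
  have hα0 : α 0 = p := by rw [hα]; simp
  have hα1 : α 1 = q := by rw [hα]; simp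
  have hpart : ∀ (k : ℕ) (T : Fin (k + 2) → ℝ), Monotone T → T 0 = 0 →
      T (Fin.last (k + 1)) = 1 →
      ∑ i : Fin (k + 1), ENNReal.ofReal (funkWa Ω t (α (T i.castSucc)) (α (T i.succ)))
        = ENNReal.ofReal (funkWa Ω t p q) := by
    intro k T hmono h0 h1
    have hmem : ∀ i : Fin (k + 2), 0 ≤ T i ∧ T i ≤ 1 := by
      intro i
      constructor
      · rw [← h0]; exact hmono (Fin.zero_le i)
      · rw [← h1]; exact hmono (Fin.le_last i)
    have hterm : ∀ i : Fin (k + 1),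
        0 ≤ funkWa Ω t (α (T i.castSucc)) (α (T i.succ)) ∧
        funkWa Ω t (α (T i.castSucc)) (α (T i.succ)) = φ (T i.castSucc) - φ (T i.succ) :=
      fun i => hW _ _ (hmem i.castSucc).1 (hmono i.castSucc_le_succ) (hmem i.succ).2
    calc ∑ i : Fin (k + 1), ENNReal.ofReal (funkWa Ω t (α (T i.castSucc)) (α (T i.succ)))
        = ∑ i : Fin (k + 1), ENNReal.ofReal ((φ ∘ T) i.castSucc - (φ ∘ T) i.succ) := by
          refine Finset.sum_congr rfl fun i _ => ?_
          rw [(hterm i).2]; rfl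
      _ = ENNReal.ofReal (∑ i : Fin (k + 1), ((φ ∘ T) i.castSucc - (φ ∘ T) i.succ)) := by
          rw [ENNReal.ofReal_sum_of_nonneg]
          intro i _
          simp only [Function.comp_apply]
          exact (hterm i).2 ▸ (hterm i).1
      _ = ENNReal.ofReal ((φ ∘ T) 0 - (φ ∘ T) (Fin.last (k + 1))) := by
          rw [funk_tele (φ ∘ T)]
      _ = ENNReal.ofReal (funkWa Ω t p q) := by
          simp only [Function.comp_apply, h0, h1]
          rw [← (hW 0 1 le_rfl zero_le_one le_rfl).2, hα0, hα1]
  apply le_antisymm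
  · refine iSup_le fun k => iSup_le fun T => iSup_le fun hT => ?_
    exact (hpart k T hT.1 hT.2.1 hT.2.2).le
  · have hmono : Monotone (![0, 1] : Fin 2 → ℝ) := by
      intro i j hij
      fin_cases i <;> fin_cases j <;> simp_all [Fin.le_def]
    have h0 : (![0, 1] : Fin 2 → ℝ) 0 = 0 := rfl
    have h1 : (![0, 1] : Fin 2 → ℝ) (Fin.last 1) = 1 := rfl
    have hval := hpart 0 ![0, 1] hmono h0 h1
    refine le_iSup_of_le 0 (le_iSup_of_le ![0, 1] (le_iSup_of_le ⟨hmono, h0, h1⟩ hval.ge))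


/-- Let `Ω ⊆ ℝⁿ` be a closed convex set with nonempty interior and let
`𝔉` be the Funk metric on the interior of `Ω`. For every `t ∈ [0,1]`, Euclidean straight
line segments contained in the interior of `Ω` are geodesics for the arithmetic weighted
Funk metric `𝔉_t^a`: the length of the segment from `p` to `q` with respect to `𝔉_t^a`
(the supremum over finite partitions of sums of `𝔉_t^a`-distances of consecutive points)
equals `𝔉_t^a(p,q)`. -/
theorem segment_geodesic_for_weighted_funk
    (Ω : Set (EuclideanSpace ℝ (Fin n)))
    (hcl : IsClosed Ω) (hconv : Convex ℝ Ω) (hne : (interior Ω).Nonempty)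
    (t : ℝ) (ht : t ∈ Icc (0 : ℝ) 1)
    (p q : EuclideanSpace ℝ (Fin n)) (hp : p ∈ interior Ω) (hq : q ∈ interior Ω) :
    weakMetricLength (fun x y => ENNReal.ofReal (funkWa Ω t x y))
        (fun s => p + s • (q - p)) 0 1
      = ENNReal.ofReal (funkWa Ω t p q) := by
  rw [weakMetricLength]
  exact funk_main Ω hcl hconv hne t ht p q hp hq
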